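/- Let I ∈ 𝓘 be a dyadic arc and let β ∈ L^∞(𝕋) be supported in I. Then ∫_I Ψ₀(S_𝓘[β](θ)) dθ ≤ (1 + (2π)^{1/2}) |I| Ψ₀(‖β‖_{L^∞(𝕋)}). -/

import Mathlib

open MeasureTheory Real Set ENNReal

noncomputable section

/-- `Ψ₀(t) = t / log(e+t)`. -/
def psi0 (t : ℝ) : ℝ := t / Real.log (Real.exp 1 + t)

/-- `Ψ₀` on `[0,∞]`, with `Ψ₀(∞) = ∞`. -/
def psi0E (t : ℝ≥0∞) : ℝ≥0∞ := t / ENNReal.ofReal (Real.log (Real.exp 1 + t.toReal))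

/-- The length `2π·2^{-k}` of a dyadic arc of generation `k`. -/
def arcLen (k : ℕ) : ℝ := 2 * π / 2 ^ k

/-- The left endpoint `2π(2^{-k} m + δ)` of the dyadic arc `I^δ(k,m)`. -/
def arcStart (δ : ℝ) (k m : ℕ) : ℝ := 2 * π * ((m : ℝ) / 2 ^ k + δ)

/-- The dyadic arc `I^δ(k,m) = [2π(2^{-k}m + δ), 2π(2^{-k}(m+1) + δ))`. -/
def arc (δ : ℝ) (k m : ℕ) : Set ℝ := Ico (arcStart δ k m) (arcStart δ k m + arcLen k)

/-- The Haar function `h_I = |I|^{-1/2}(χ_{I_-} - χ_{I_+})` of the arc `I^δ(k,m)`. -/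
def haar (δ : ℝ) (k m : ℕ) : ℝ → ℝ := fun θ =>
  (arcLen k) ^ (-(1 : ℝ) / 2) *
    ((Ico (arcStart δ k m) (arcStart δ k m + arcLen k / 2)).indicator (fun _ => (1 : ℝ)) θ -
      (Ico (arcStart δ k m + arcLen k / 2) (arcStart δ k m + arcLen k)).indicator
        (fun _ => (1 : ℝ)) θ)

/-- The fundamental domain `[2πδ, 2πδ + 2π)` of the torus, containing all arcs of `𝓘^δ`. -/
def torus (δ : ℝ) : Set ℝ := Ico (2 * π * δ) (2 * π * δ + 2 * π)

/-- The Haar coefficient `⟨f, h_I⟩ = ∫_𝕋 f h_I dθ`. -/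
def haarCoeff (δ : ℝ) (k m : ℕ) (f : ℝ → ℝ) : ℝ := ∫ θ in torus δ, f θ * haar δ k m θ

/-- The dyadic square function `S_𝓘[f] = (Σ_{I∈𝓘} |⟨f,h_I⟩|² χ_I/|I|)^{1/2}` (valued in `[0,∞]`). -/
def sqFn (δ : ℝ) (f : ℝ → ℝ) (θ : ℝ) : ℝ≥0∞ :=
  (∑' (k : ℕ) (m : Fin (2 ^ k)),
      (‖haarCoeff δ k m f‖₊ : ℝ≥0∞) ^ 2 *
        (arc δ k m).indicator (fun _ => (ENNReal.ofReal (arcLen k))⁻¹) θ) ^ (1 / 2 : ℝ)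

/-- The `L^∞` norm (essential supremum of `|f|`), valued in `[0,∞]`. -/
def einfNorm (f : ℝ → ℝ) : ℝ≥0∞ := essSup (fun θ => (‖f θ‖₊ : ℝ≥0∞)) volume

lemma one_le_logE {t : ℝ} (ht : 0 ≤ t) : 1 ≤ Real.log (Real.exp 1 + t) := by
  calc (1:ℝ) = Real.log (Real.exp 1) := (Real.log_exp 1).symm
  _ ≤ _ := Real.log_le_log (Real.exp_pos 1) (by linarith)

lemma psi0_nonneg {t : ℝ} (ht : 0 ≤ t) : 0 ≤ psi0 t :=
  div_nonneg ht (by linarith [one_le_logE ht])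

lemma psi0_mono {s M : ℝ} (hs : 0 ≤ s) (hsM : s ≤ M) : psi0 s ≤ psi0 M := by
  rcases eq_or_lt_of_le hs with h | hs0
  · simp only [psi0, ← h]
    simpa [psi0] using psi0_nonneg (le_trans hs hsM)
  have hM0 : 0 < M := lt_of_lt_of_le hs0 hsM
  have hLs : (0:ℝ) < Real.log (Real.exp 1 + s) := lt_of_lt_of_le one_pos (one_le_logE hs)
  have hLM : (0:ℝ) < Real.log (Real.exp 1 + M) := lt_of_lt_of_le one_pos (one_le_logE hM0.le)
  rw [psi0, psi0, div_le_div_iff₀ hLs hLM]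
  have he : (0:ℝ) < Real.exp 1 := Real.exp_pos 1
  have hb : 1 + (M/s) * (s / Real.exp 1) ≤ (1 + s / Real.exp 1) ^ (M/s) :=
    one_add_mul_self_le_rpow_one_add
      (le_trans (by norm_num : (-1:ℝ) ≤ 0) (by positivity)) ((one_le_div hs0).2 hsM)
  have h1 : Real.exp 1 + M ≤ (Real.exp 1) * (1 + s / Real.exp 1) ^ (M/s) := by
    calc Real.exp 1 + M = Real.exp 1 * (1 + (M/s) * (s / Real.exp 1)) := by
          field_simp
    _ ≤ _ := by nlinarith
  have h2 : (Real.exp 1) * (1 + s / Real.exp 1) ^ (M/s) ≤ (Real.exp 1 + s) ^ (M/s) := by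
    have hsplit : (Real.exp 1 + s) ^ (M/s) =
        (Real.exp 1) ^ (M/s) * (1 + s / Real.exp 1) ^ (M/s) := by
      rw [← Real.mul_rpow he.le (by positivity)]
      congr 1; field_simp
    rw [hsplit]
    have hee : Real.exp 1 ≤ (Real.exp 1) ^ (M/s) := by
      nth_rewrite 1 [← Real.rpow_one (Real.exp 1)]
      exact Real.rpow_le_rpow_of_exponent_le (Real.one_le_exp one_pos.le)
        ((one_le_div hs0).2 hsM)
    exact mul_le_mul_of_nonneg_right hee (by positivity)
  have h3 : Real.log (Real.exp 1 + M) ≤ (M/s) * Real.log (Real.exp 1 + s) := by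
    calc Real.log (Real.exp 1 + M) ≤ Real.log ((Real.exp 1 + s) ^ (M/s)) :=
          Real.log_le_log (by positivity) (le_trans h1 h2)
    _ = (M/s) * Real.log (Real.exp 1 + s) := Real.log_rpow (by positivity) _
  calc s * Real.log (Real.exp 1 + M) ≤ s * ((M/s) * Real.log (Real.exp 1 + s)) := by nlinarith
  _ = M * Real.log (Real.exp 1 + s) := by field_simp

lemma psi0_pointwise {M t : ℝ} (hM : 0 < M) (ht : 0 ≤ t) :
    psi0 t ≤ psi0 M + t * (psi0 M / M) := by
  have hLM : (0:ℝ) < Real.log (Real.exp 1 + M) := lt_of_lt_of_le one_pos (one_le_logE hM.le)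
  have hc : psi0 M / M = 1 / Real.log (Real.exp 1 + M) := by
    rw [psi0]; field_simp
  rcases le_or_gt t M with h | h
  · have : 0 ≤ t * (psi0 M / M) :=
      mul_nonneg ht (div_nonneg (psi0_nonneg hM.le) hM.le)
    linarith [psi0_mono ht h]
  · have hLt : (0:ℝ) < Real.log (Real.exp 1 + t) := lt_of_lt_of_le one_pos (one_le_logE ht)
    have h4 : Real.log (Real.exp 1 + M) ≤ Real.log (Real.exp 1 + t) :=
      Real.log_le_log (by positivity) (by linarith)
    have : psi0 t ≤ t * (psi0 M / M) := by
      rw [hc, psi0, mul_one_div]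
      exact div_le_div_of_nonneg_left ht hLM h4
    linarith [psi0_nonneg hM.le]
lemma arcLen_pos (k : ℕ) : 0 < arcLen k := by
  unfold arcLen; positivity

lemma arcLen_succ (k : ℕ) : arcLen (k+1) = arcLen k / 2 := by
  unfold arcLen; rw [pow_succ]; ring

lemma volume_arc (δ : ℝ) (k m : ℕ) : volume (arc δ k m) = ENNReal.ofReal (arcLen k) := by
  rw [arc, Real.volume_Ico]; congr 1; ring

lemma arcStart_left (δ : ℝ) (k m : ℕ) : arcStart δ (k+1) (2*m) = arcStart δ k m := by
  unfold arcStart; rw [pow_succ]; push_cast; congr 1; field_simp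

lemma arcStart_right (δ : ℝ) (k m : ℕ) :
    arcStart δ (k+1) (2*m+1) = arcStart δ k m + arcLen k / 2 := by
  unfold arcStart arcLen; rw [pow_succ]; push_cast; field_simp; ring

lemma arc_left_eq (δ : ℝ) (k m : ℕ) :
    arc δ (k+1) (2*m) = Ico (arcStart δ k m) (arcStart δ k m + arcLen k / 2) := by
  rw [arc, arcStart_left, arcLen_succ]

lemma arc_right_eq (δ : ℝ) (k m : ℕ) :
    arc δ (k+1) (2*m+1) = Ico (arcStart δ k m + arcLen k / 2) (arcStart δ k m + arcLen k) := by
  rw [arc, arcStart_right, arcLen_succ]; congr 1; ring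

lemma arc_split (δ : ℝ) (k m : ℕ) :
    arc δ k m = arc δ (k+1) (2*m) ∪ arc δ (k+1) (2*m+1) := by
  rw [arc_left_eq, arc_right_eq, arc]
  rw [Ico_union_Ico_eq_Ico] <;> linarith [arcLen_pos k]

lemma torus_eq (δ : ℝ) : torus δ = arc δ 0 0 := by
  unfold torus arc arcStart arcLen
  norm_num

lemma arc_subset_torus (δ : ℝ) (k m : ℕ) (hm : m < 2^k) : arc δ k m ⊆ torus δ := by
  have h2k : (0:ℝ) < 2^k := by positivity
  have hπ : (0:ℝ) < π := Real.pi_pos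
  have hm' : (m:ℝ) + 1 ≤ 2^k := by exact_mod_cast hm
  have h1 : ((m:ℝ)+1)/2^k ≤ 1 := by rw [div_le_one h2k]; linarith
  have h2 : 2*π*(((m:ℝ)+1)/2^k) ≤ 2*π := by nlinarith
  have h2' : 2*π*((m:ℝ)/2^k) + 2*π/2^k = 2*π*(((m:ℝ)+1)/2^k) := by field_simp
  apply Ico_subset_Ico
  · unfold arcStart; nlinarith [div_nonneg (Nat.cast_nonneg m) h2k.le]
  · unfold arcStart arcLen
    nlinarith

lemma arc_le_of_lt (δ : ℝ) (k : ℕ) {a b : ℕ} (hab : a < b) :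
    arcStart δ k a + arcLen k ≤ arcStart δ k b := by
  have h2k : (0:ℝ) < 2^k := by positivity
  have hπ : (0:ℝ) < π := Real.pi_pos
  have hab' : (a:ℝ) + 1 ≤ b := by exact_mod_cast hab
  have h2 : 2*π*(((a:ℝ)+1)/2^k) ≤ 2*π*((b:ℝ)/2^k) := by gcongr
  have h2' : 2*π*((a:ℝ)/2^k) + 2*π/2^k = 2*π*(((a:ℝ)+1)/2^k) := by field_simp
  unfold arcStart arcLen
  nlinarith

lemma arc_disjoint (δ : ℝ) (k : ℕ) {m m' : ℕ} (h : m ≠ m') :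
    Disjoint (arc δ k m) (arc δ k m') := by
  rcases lt_or_gt_of_ne h with hlt | hgt
  · exact Ico_disjoint_Ico.mpr (le_trans (min_le_left _ _)
      (le_trans (arc_le_of_lt δ k hlt) (le_max_right _ _)))
  · exact Ico_disjoint_Ico.mpr (le_trans (min_le_right _ _)
      (le_trans (arc_le_of_lt δ k hgt) (le_max_left _ _)))
def intA (δ : ℝ) (β : ℝ → ℝ) (g m' : ℕ) : ℝ := ∫ x in arc δ g m', β x

def Qsum (δ : ℝ) (β : ℝ → ℝ) (g : ℕ) : ℝ :=
  ∑ m' ∈ Finset.range (2^g), (intA δ β g m')^2 / arcLen g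

variable {δ : ℝ} {β : ℝ → ℝ}

lemma haarCoeff_eq (hβ : IntegrableOn β (torus δ) volume) {k m : ℕ} (hm : m < 2^k) :
    haarCoeff δ k m β =
      (arcLen k) ^ (-(1:ℝ)/2) * (intA δ β (k+1) (2*m) - intA δ β (k+1) (2*m+1)) := by
  set L : Set ℝ := Ico (arcStart δ k m) (arcStart δ k m + arcLen k / 2) with hL
  set R : Set ℝ := Ico (arcStart δ k m + arcLen k / 2) (arcStart δ k m + arcLen k) with hR
  have hLarc : arc δ (k+1) (2*m) = L := arc_left_eq δ k m
  have hRarc : arc δ (k+1) (2*m+1) = R := arc_right_eq δ k m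
  have hLsub : L ⊆ torus δ := hLarc ▸ arc_subset_torus δ (k+1) (2*m) (by omega)
  have hRsub : R ⊆ torus δ := hRarc ▸ arc_subset_torus δ (k+1) (2*m+1) (by omega)
  have hfun : ∀ θ, β θ * haar δ k m θ =
      (arcLen k) ^ (-(1:ℝ)/2) * (L.indicator β θ - R.indicator β θ) := by
    intro θ
    rw [haar]
    by_cases h1 : θ ∈ L <;> by_cases h2 : θ ∈ R <;>
      simp [Set.indicator, h1, h2, ← hL, ← hR] <;> ring
  rw [haarCoeff]
  simp_rw [hfun]
  rw [MeasureTheory.integral_const_mul]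
  congr 1
  rw [integral_sub (hβ.indicator measurableSet_Ico) (hβ.indicator measurableSet_Ico),
    setIntegral_indicator measurableSet_Ico, setIntegral_indicator measurableSet_Ico,
    Set.inter_eq_self_of_subset_right hLsub, Set.inter_eq_self_of_subset_right hRsub,
    intA, intA, hLarc, hRarc]

lemma intA_split (hβ : IntegrableOn β (torus δ) volume) {k m : ℕ} (hm : m < 2^k) :
    intA δ β k m = intA δ β (k+1) (2*m) + intA δ β (k+1) (2*m+1) := by
  have hLsub := arc_subset_torus δ (k+1) (2*m) (by omega : 2*m < 2^(k+1))
  have hRsub := arc_subset_torus δ (k+1) (2*m+1) (by omega : 2*m+1 < 2^(k+1))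
  rw [intA, arc_split δ k m]
  rw [setIntegral_union (arc_disjoint δ (k+1) (by omega)) measurableSet_Ico
    (hβ.mono_set hLsub) (hβ.mono_set hRsub)]
  rfl

lemma sq_haarCoeff (hβ : IntegrableOn β (torus δ) volume) {k m : ℕ} (hm : m < 2^k) :
    (haarCoeff δ k m β)^2 =
      ((intA δ β (k+1) (2*m))^2 / arcLen (k+1) + (intA δ β (k+1) (2*m+1))^2 / arcLen (k+1))
        - (intA δ β k m)^2 / arcLen k := by
  have hl := arcLen_pos k
  have hc : ((arcLen k) ^ (-(1:ℝ)/2))^2 = (arcLen k)⁻¹ := by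
    rw [← Real.rpow_natCast ((arcLen k) ^ (-(1:ℝ)/2)) 2, ← Real.rpow_mul hl.le]
    norm_num
    exact Real.rpow_neg_one _
  rw [haarCoeff_eq hβ hm, mul_pow, hc, intA_split hβ hm, arcLen_succ]
  field_simp
  ring

lemma sum_range_two_mul (f : ℕ → ℝ) (n : ℕ) :
    ∑ i ∈ Finset.range (2*n), f i = ∑ i ∈ Finset.range n, (f (2*i) + f (2*i+1)) := by
  induction n with
  | zero => simp
  | succ n ih =>
      have : 2*(n+1) = (2*n+1)+1 := by ring
      rw [this, Finset.sum_range_succ, Finset.sum_range_succ, ih, Finset.sum_range_succ]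
      ring

lemma Q_step (hβ : IntegrableOn β (torus δ) volume) (g : ℕ) :
    ∑ m' ∈ Finset.range (2^g), (haarCoeff δ g m' β)^2 = Qsum δ β (g+1) - Qsum δ β g := by
  have h1 : Qsum δ β (g+1) = ∑ m' ∈ Finset.range (2^g),
      ((intA δ β (g+1) (2*m'))^2 / arcLen (g+1) + (intA δ β (g+1) (2*m'+1))^2 / arcLen (g+1)) := by
    rw [Qsum, pow_succ, mul_comm (2^g) 2, sum_range_two_mul]
  rw [h1, Qsum, ← Finset.sum_sub_distrib]
  apply Finset.sum_congr rfl
  intro m' hm'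
  exact sq_haarCoeff hβ (Finset.mem_range.mp hm')

lemma Q_telescope (hβ : IntegrableOn β (torus δ) volume) (K : ℕ) :
    ∑ g ∈ Finset.range K, ∑ m' ∈ Finset.range (2^g), (haarCoeff δ g m' β)^2
      = Qsum δ β K - Qsum δ β 0 := by
  have : ∀ g ∈ Finset.range K, ∑ m' ∈ Finset.range (2^g), (haarCoeff δ g m' β)^2
      = Qsum δ β (g+1) - Qsum δ β g := fun g _ => Q_step hβ g
  rw [Finset.sum_congr rfl this, Finset.sum_range_sub (Qsum δ β)]
lemma Qsum_nonneg (g : ℕ) : 0 ≤ Qsum δ β g :=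
  Finset.sum_nonneg fun m' _ => div_nonneg (sq_nonneg _) (arcLen_pos g).le

lemma lintegral_CS (μ : Measure ℝ) (f : ℝ → ℝ≥0∞) (hf : AEMeasurable f μ) :
    (∫⁻ x, f x ∂μ)^2 ≤ (∫⁻ x, (f x)^2 ∂μ) * μ Set.univ := by
  have hpq : Real.HolderConjugate 2 2 := ⟨by norm_num, by norm_num, by norm_num⟩
  have h := ENNReal.lintegral_mul_le_Lp_mul_Lq μ hpq hf
    (aemeasurable_const : AEMeasurable (fun _ : ℝ => (1:ℝ≥0∞)) μ)
  simp only [Pi.mul_apply, mul_one, ENNReal.one_rpow, lintegral_const, one_mul] at h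
  have hsq : ∀ a : ℝ≥0∞, (a ^ (1/2:ℝ))^2 = a := by
    intro a
    rw [← ENNReal.rpow_natCast (a ^ (1/2:ℝ)) 2, ← ENNReal.rpow_mul]
    norm_num
  have hrpow : ∀ a : ℝ≥0∞, a ^ (2:ℝ) = a^2 := by
    intro a
    rw [show (2:ℝ) = ((2:ℕ):ℝ) by norm_num, ENNReal.rpow_natCast]
  simp_rw [hrpow] at h
  calc (∫⁻ x, f x ∂μ)^2
      ≤ ((∫⁻ x, (f x)^2 ∂μ) ^ (1/2:ℝ) * (μ Set.univ) ^ (1/2:ℝ))^2 := by gcongr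
  _ = (∫⁻ x, (f x)^2 ∂μ) * μ Set.univ := by rw [mul_pow, hsq, hsq]

lemma sq_intA_le (hβ : IntegrableOn β (torus δ) volume) {g m' : ℕ} (hm' : m' < 2^g)
    (hfin : (∫⁻ x in arc δ g m', ((‖β x‖₊ : ℝ≥0∞))^2) ≠ ⊤) :
    (intA δ β g m')^2 ≤ arcLen g * (∫⁻ x in arc δ g m', ((‖β x‖₊ : ℝ≥0∞))^2).toReal := by
  have hsub := arc_subset_torus δ g m' hm'
  have hμ : volume (arc δ g m') = ENNReal.ofReal (arcLen g) := volume_arc δ g m'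
  have hmm : AEMeasurable (fun x => ((‖β x‖₊ : ℝ≥0∞))) (volume.restrict (arc δ g m')) :=
    (hβ.mono_set hsub).aestronglyMeasurable.enorm
  have h1 : |intA δ β g m'| ≤ (∫⁻ x in arc δ g m', ((‖β x‖₊ : ℝ≥0∞))).toReal := by
    have hfun : (fun x => ((‖β x‖₊ : ℝ≥0∞))) = fun x => ENNReal.ofReal ‖β x‖ :=
      funext fun x => (ofReal_norm (β x)).symm
    rw [intA, ← Real.norm_eq_abs, hfun]
    exact MeasureTheory.norm_integral_le_lintegral_norm β
  have hCS := lintegral_CS (volume.restrict (arc δ g m')) (fun x => ((‖β x‖₊ : ℝ≥0∞))) hmm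
  rw [Measure.restrict_apply_univ, hμ] at hCS
  have hfin2 : (∫⁻ x in arc δ g m', ((‖β x‖₊ : ℝ≥0∞))^2) * ENNReal.ofReal (arcLen g) ≠ ⊤ :=
    ENNReal.mul_ne_top hfin ENNReal.ofReal_ne_top
  calc (intA δ β g m')^2 = |intA δ β g m'|^2 := (sq_abs _).symm
  _ ≤ ((∫⁻ x in arc δ g m', ((‖β x‖₊ : ℝ≥0∞))).toReal)^2 := by
      apply pow_le_pow_left₀ (abs_nonneg _) h1
  _ = ((∫⁻ x in arc δ g m', ((‖β x‖₊ : ℝ≥0∞)))^2).toReal := by rw [ENNReal.toReal_pow]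
  _ ≤ ((∫⁻ x in arc δ g m', ((‖β x‖₊ : ℝ≥0∞))^2) * ENNReal.ofReal (arcLen g)).toReal :=
      ENNReal.toReal_mono hfin2 hCS
  _ = arcLen g * (∫⁻ x in arc δ g m', ((‖β x‖₊ : ℝ≥0∞))^2).toReal := by
      rw [ENNReal.toReal_mul, ENNReal.toReal_ofReal (arcLen_pos g).le, mul_comm]

lemma Q_le (hβ : IntegrableOn β (torus δ) volume)
    (hfin : (∫⁻ x in torus δ, ((‖β x‖₊ : ℝ≥0∞))^2) ≠ ⊤) (g : ℕ) :
    Qsum δ β g ≤ (∫⁻ x in torus δ, ((‖β x‖₊ : ℝ≥0∞))^2).toReal := by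
  have hfinJ : ∀ m' : ℕ, m' < 2^g → (∫⁻ x in arc δ g m', ((‖β x‖₊ : ℝ≥0∞))^2) ≠ ⊤ :=
    fun m' hm' => ne_top_of_le_ne_top hfin
      (lintegral_mono_set (arc_subset_torus δ g m' hm'))
  have step1 : Qsum δ β g ≤
      ∑ m' ∈ Finset.range (2^g), (∫⁻ x in arc δ g m', ((‖β x‖₊ : ℝ≥0∞))^2).toReal := by
    apply Finset.sum_le_sum
    intro m' hm'
    have hm'' := Finset.mem_range.mp hm'
    rw [div_le_iff₀ (arcLen_pos g)]
    calc (intA δ β g m')^2 ≤ arcLen g *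
        (∫⁻ x in arc δ g m', ((‖β x‖₊ : ℝ≥0∞))^2).toReal := sq_intA_le hβ hm'' (hfinJ _ hm'')
    _ = _ := by ring
  have step2 : ∑ m' ∈ Finset.range (2^g), (∫⁻ x in arc δ g m', ((‖β x‖₊ : ℝ≥0∞))^2).toReal
      = (∑ m' ∈ Finset.range (2^g), ∫⁻ x in arc δ g m', ((‖β x‖₊ : ℝ≥0∞))^2).toReal :=
    (ENNReal.toReal_sum (fun m' hm' => hfinJ m' (Finset.mem_range.mp hm'))).symm
  have step3 : ∑ m' ∈ Finset.range (2^g), (∫⁻ x in arc δ g m', ((‖β x‖₊ : ℝ≥0∞))^2)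
      = ∫⁻ x in ⋃ m' ∈ Finset.range (2^g), arc δ g m', ((‖β x‖₊ : ℝ≥0∞))^2 := by
    exact (lintegral_biUnion_finset (fun a _ b _ hab => arc_disjoint δ g hab)
      (fun m' _ => (measurableSet_Ico : MeasurableSet (arc δ g m')))
      (fun x => ((‖β x‖₊ : ℝ≥0∞))^2)).symm
  have step4 : (∫⁻ x in ⋃ m' ∈ Finset.range (2^g), arc δ g m', ((‖β x‖₊ : ℝ≥0∞))^2)
      ≤ ∫⁻ x in torus δ, ((‖β x‖₊ : ℝ≥0∞))^2 := by
    apply lintegral_mono_set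
    apply Set.iUnion₂_subset
    intro m' hm'
    exact arc_subset_torus δ g m' (Finset.mem_range.mp hm')
  calc Qsum δ β g ≤ _ := step1
  _ = _ := step2
  _ ≤ _ := by
      rw [step3]
      exact ENNReal.toReal_mono hfin step4

lemma bessel (hβ : IntegrableOn β (torus δ) volume)
    (hfin : (∫⁻ x in torus δ, ((‖β x‖₊ : ℝ≥0∞))^2) ≠ ⊤) :
    ∑' (g : ℕ), ∑' (m' : Fin (2^g)), ((‖haarCoeff δ g (m' : ℕ) β‖₊ : ℝ≥0∞))^2
      ≤ ∫⁻ x in torus δ, ((‖β x‖₊ : ℝ≥0∞))^2 := by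
  have hterm : ∀ r : ℝ, ((‖r‖₊ : ℝ≥0∞))^2 = ENNReal.ofReal (r^2) := by
    intro r
    rw [show ((‖r‖₊ : ℝ≥0∞)) = ENNReal.ofReal ‖r‖ from (ofReal_norm r).symm, ← ENNReal.ofReal_pow (norm_nonneg r)]
    simp [Real.norm_eq_abs, sq_abs]
  have hinner : ∀ g : ℕ, ∑' (m' : Fin (2^g)), ((‖haarCoeff δ g (m' : ℕ) β‖₊ : ℝ≥0∞))^2
      = ENNReal.ofReal (∑ m' ∈ Finset.range (2^g), (haarCoeff δ g m' β)^2) := by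
    intro g
    rw [tsum_fintype, ENNReal.ofReal_sum_of_nonneg (fun i _ => sq_nonneg _),
      ← Fin.sum_univ_eq_sum_range (fun m' => ENNReal.ofReal ((haarCoeff δ g m' β)^2))]
    exact Finset.sum_congr rfl fun i _ => hterm _
  simp_rw [hinner]
  rw [ENNReal.tsum_eq_iSup_sum]
  apply iSup_le
  intro s
  obtain ⟨K, hK⟩ := Finset.exists_nat_subset_range s
  calc ∑ g ∈ s, ENNReal.ofReal (∑ m' ∈ Finset.range (2^g), (haarCoeff δ g m' β)^2)
      ≤ ∑ g ∈ Finset.range K,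
        ENNReal.ofReal (∑ m' ∈ Finset.range (2^g), (haarCoeff δ g m' β)^2) :=
      Finset.sum_le_sum_of_subset hK
  _ = ENNReal.ofReal (∑ g ∈ Finset.range K,
        ∑ m' ∈ Finset.range (2^g), (haarCoeff δ g m' β)^2) :=
      (ENNReal.ofReal_sum_of_nonneg fun g _ =>
        Finset.sum_nonneg fun m' _ => sq_nonneg _).symm
  _ = ENNReal.ofReal (Qsum δ β K - Qsum δ β 0) := by rw [Q_telescope hβ]
  _ ≤ ENNReal.ofReal (Qsum δ β K) :=
      ENNReal.ofReal_le_ofReal (by linarith [Qsum_nonneg (δ := δ) (β := β) 0])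
  _ ≤ ENNReal.ofReal ((∫⁻ x in torus δ, ((‖β x‖₊ : ℝ≥0∞))^2).toReal) :=
      ENNReal.ofReal_le_ofReal (Q_le hβ hfin K)
  _ = _ := ENNReal.ofReal_toReal hfin
lemma psi0_pos {M : ℝ} (hM : 0 < M) : 0 < psi0 M :=
  div_pos hM (lt_of_lt_of_le one_pos (one_le_logE hM.le))

lemma psi0E_le {M : ℝ} (hM : 0 < M) (s : ℝ≥0∞) :
    psi0E s ≤ ENNReal.ofReal (psi0 M) + s * ENNReal.ofReal (psi0 M / M) := by
  have hc : ENNReal.ofReal (psi0 M / M) ≠ 0 :=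
    (ENNReal.ofReal_pos.2 (div_pos (psi0_pos hM) hM)).ne'
  rcases eq_or_ne s ⊤ with rfl | hs
  · have : (⊤ : ℝ≥0∞) * ENNReal.ofReal (psi0 M / M) = ⊤ := ENNReal.top_mul hc
    rw [this]
    simp [psi0E]
  · have hL : 0 < Real.log (Real.exp 1 + s.toReal) :=
      lt_of_lt_of_le one_pos (one_le_logE ENNReal.toReal_nonneg)
    have h1 : psi0E s = ENNReal.ofReal (psi0 s.toReal) := by
      rw [psi0E, psi0, ENNReal.ofReal_div_of_pos hL, ENNReal.ofReal_toReal hs]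
    rw [h1]
    calc ENNReal.ofReal (psi0 s.toReal)
        ≤ ENNReal.ofReal (psi0 M + s.toReal * (psi0 M / M)) :=
        ENNReal.ofReal_le_ofReal (psi0_pointwise hM ENNReal.toReal_nonneg)
    _ = ENNReal.ofReal (psi0 M) + ENNReal.ofReal (s.toReal) * ENNReal.ofReal (psi0 M / M) := by
        rw [ENNReal.ofReal_add (psi0_nonneg hM.le)
          (mul_nonneg ENNReal.toReal_nonneg (div_nonneg (psi0_nonneg hM.le) hM.le)),
          ENNReal.ofReal_mul ENNReal.toReal_nonneg]
    _ = _ := by rw [ENNReal.ofReal_toReal hs]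

/-- For an `L^∞` function `β` supported in a dyadic arc `I`,
`∫_I Ψ₀(S_𝓘[β]) ≤ (1 + √(2π)) |I| Ψ₀(‖β‖_∞)`. -/
theorem stmt9 (δ : ℝ) (hδ0 : 0 ≤ δ) (hδ1 : δ < 1) (k m : ℕ) (hm : m < 2 ^ k)
    (β : ℝ → ℝ) (hmeas : Measurable β) (hsupp : Function.support β ⊆ arc δ k m)
    (hbd : einfNorm β < ⊤) :
    (∫⁻ θ in arc δ k m, psi0E (sqFn δ β θ)) ≤
      ENNReal.ofReal ((1 + Real.sqrt (2 * π)) * arcLen k * psi0 ((einfNorm β).toReal)) := by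
  have h_ae : ∀ᵐ θ, (‖β θ‖₊ : ℝ≥0∞) ≤ einfNorm β := ENNReal.ae_le_essSup (fun θ => (‖β θ‖₊ : ℝ≥0∞))
  by_cases hM0 : einfNorm β = 0
  · -- degenerate case: β = 0 a.e.
    have hβ0 : ∀ᵐ θ, β θ = 0 := by
      filter_upwards [h_ae] with θ hθ
      rw [hM0, nonpos_iff_eq_zero] at hθ
      simpa using hθ
    have hco : ∀ g m' : ℕ, haarCoeff δ g m' β = 0 := by
      intro g m'
      rw [haarCoeff]
      apply integral_eq_zero_of_ae
      filter_upwards [ae_restrict_of_ae hβ0] with θ hθ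
      simp [hθ]
    have hzero : ∀ θ, psi0E (sqFn δ β θ) = 0 := by
      intro θ
      have : sqFn δ β θ = 0 := by
        rw [sqFn]
        have : ∀ (g : ℕ) (m' : Fin (2^g)),
            (‖haarCoeff δ g (m' : ℕ) β‖₊ : ℝ≥0∞) ^ 2 *
              (arc δ g m').indicator (fun _ => (ENNReal.ofReal (arcLen g))⁻¹) θ = 0 := by
          intro g m'
          rw [hco g m']
          simp
        simp only [this, tsum_zero]
        exact ENNReal.zero_rpow_of_pos (by norm_num)
      rw [this]
      simp [psi0E]
    simp only [hzero, lintegral_zero]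
    exact zero_le
  · have harcmeas : ∀ (g m' : ℕ), MeasurableSet (arc δ g m') := fun _ _ => measurableSet_Ico
    have hindmeas : ∀ (g m' : ℕ),
        Measurable ((arc δ g m').indicator fun _ => (ENNReal.ofReal (arcLen g))⁻¹) :=
      fun g m' => measurable_const.indicator (harcmeas g m')
    set Mt := einfNorm β with hMtdef
    set M : ℝ := Mt.toReal with hMdef
    have hMpos : 0 < M := ENNReal.toReal_pos hM0 hbd.ne
    have hMt : Mt = ENNReal.ofReal M := (ENNReal.ofReal_toReal hbd.ne).symm
    have hβae' : ∀ᵐ θ, ‖β θ‖ ≤ M := by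
      filter_upwards [h_ae] with θ hθ
      have := ENNReal.toReal_mono hbd.ne hθ
      simpa using this
    have hβint : IntegrableOn β (torus δ) volume := by
      refine Integrable.mono' (integrableOn_const ?_)
        hmeas.aestronglyMeasurable (ae_restrict_of_ae hβae')
      rw [torus, Real.volume_Ico]
      exact ENNReal.ofReal_ne_top
    -- bound on the L² mass
    have hsupp2 : Function.support (fun θ => ((‖β θ‖₊ : ℝ≥0∞))^2) ⊆ arc δ k m := by
      intro θ hθ
      apply hsupp
      intro h0
      apply hθ
      simp [Function.mem_support.mp, h0]
    have hb2 : (∫⁻ x in torus δ, ((‖β x‖₊ : ℝ≥0∞))^2)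
        ≤ Mt^2 * ENNReal.ofReal (arcLen k) := by
      calc (∫⁻ x in torus δ, ((‖β x‖₊ : ℝ≥0∞))^2)
          ≤ ∫⁻ x, ((‖β x‖₊ : ℝ≥0∞))^2 := setLIntegral_le_lintegral _ _
      _ = ∫⁻ x in arc δ k m, ((‖β x‖₊ : ℝ≥0∞))^2 := by
          conv_lhs => rw [← Set.indicator_eq_self.2 hsupp2]
          exact lintegral_indicator (harcmeas k m) _
      _ ≤ ∫⁻ _ in arc δ k m, Mt^2 := by
          apply lintegral_mono_ae
          filter_upwards [ae_restrict_of_ae h_ae] with θ hθ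
          exact pow_le_pow_left' hθ 2
      _ = Mt^2 * ENNReal.ofReal (arcLen k) := by
          rw [lintegral_const, Measure.restrict_apply_univ, volume_arc]
    have hfin : (∫⁻ x in torus δ, ((‖β x‖₊ : ℝ≥0∞))^2) ≠ ⊤ :=
      ne_top_of_le_ne_top (ENNReal.mul_ne_top
        (ENNReal.pow_ne_top hbd.ne) ENNReal.ofReal_ne_top) hb2
    -- the square function: T = S²
    set T : ℝ → ℝ≥0∞ := fun θ => ∑' (g : ℕ) (m' : Fin (2^g)),
        (‖haarCoeff δ g (m' : ℕ) β‖₊ : ℝ≥0∞) ^ 2 *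
          (arc δ g m').indicator (fun _ => (ENNReal.ofReal (arcLen g))⁻¹) θ with hTdef
    have hTmeas : Measurable T := by
      apply Measurable.ennreal_tsum
      intro g
      apply Measurable.ennreal_tsum
      intro m'
      exact (Measurable.indicator measurable_const measurableSet_Ico).const_mul _
    have hsqT : sqFn δ β = fun θ => T θ ^ (1/2 : ℝ) := rfl
    have hSmeas : Measurable (sqFn δ β) := by
      rw [hsqT]
      exact hTmeas.pow_const _
    -- ∫_torus T = Bessel sum
    have hTint : (∫⁻ θ in torus δ, T θ) ≤ Mt^2 * ENNReal.ofReal (arcLen k) := by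
      have hmeas1 : ∀ (g : ℕ) (m' : Fin (2^g)), Measurable (fun θ =>
          (‖haarCoeff δ g (m' : ℕ) β‖₊ : ℝ≥0∞) ^ 2 *
            (arc δ g m').indicator (fun _ => (ENNReal.ofReal (arcLen g))⁻¹) θ) :=
        fun g m' => (hindmeas g (m' : ℕ)).const_mul _
      have hswap : (∫⁻ θ in torus δ, T θ) = ∑' (g : ℕ) (m' : Fin (2^g)),
          ∫⁻ θ in torus δ, (‖haarCoeff δ g (m' : ℕ) β‖₊ : ℝ≥0∞) ^ 2 *
            (arc δ g m').indicator (fun _ => (ENNReal.ofReal (arcLen g))⁻¹) θ := by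
        rw [hTdef]
        rw [lintegral_tsum (fun g => (Measurable.ennreal_tsum
          (fun m' => hmeas1 g m')).aemeasurable)]
        congr 1
        funext g
        exact lintegral_tsum (fun m' => (hmeas1 g m').aemeasurable)
      have hterm : ∀ (g : ℕ) (m' : Fin (2^g)),
          (∫⁻ θ in torus δ, (‖haarCoeff δ g (m' : ℕ) β‖₊ : ℝ≥0∞) ^ 2 *
            (arc δ g m').indicator (fun _ => (ENNReal.ofReal (arcLen g))⁻¹) θ)
          = (‖haarCoeff δ g (m' : ℕ) β‖₊ : ℝ≥0∞) ^ 2 := by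
        intro g m'
        rw [lintegral_const_mul _ (hindmeas g (m' : ℕ))]
        have h1 : (∫⁻ θ in torus δ,
            (arc δ g m').indicator (fun _ => (ENNReal.ofReal (arcLen g))⁻¹) θ) = 1 := by
          rw [lintegral_indicator (harcmeas g (m' : ℕ)),
            Measure.restrict_restrict (harcmeas g (m' : ℕ)),
            Set.inter_eq_self_of_subset_left (arc_subset_torus δ g (m' : ℕ) m'.isLt),
            lintegral_const, Measure.restrict_apply_univ, volume_arc]
          exact ENNReal.inv_mul_cancel
            ((ENNReal.ofReal_pos.2 (arcLen_pos g)).ne') ENNReal.ofReal_ne_top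
        rw [h1, mul_one]
      rw [hswap]
      simp_rw [hterm]
      exact le_trans (bessel hβint hfin) hb2
    -- Cauchy-Schwarz for ∫_I S
    have hIT : (∫⁻ θ in arc δ k m, T θ) ≤ Mt^2 * ENNReal.ofReal (arcLen k) :=
      le_trans (lintegral_mono_set (arc_subset_torus δ k m hm)) hTint
    have hrphalf : ∀ a : ℝ≥0∞, (a ^ (1/2:ℝ)) ^ (2:ℝ) = a := by
      intro a; rw [← ENNReal.rpow_mul]; norm_num
    have hS : (∫⁻ θ in arc δ k m, sqFn δ β θ) ≤ Mt * ENNReal.ofReal (arcLen k) := by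
      have hpq : Real.HolderConjugate 2 2 := ⟨by norm_num, by norm_num, by norm_num⟩
      have h := ENNReal.lintegral_mul_le_Lp_mul_Lq (volume.restrict (arc δ k m)) hpq
        hSmeas.aemeasurable (aemeasurable_const : AEMeasurable (fun _ : ℝ => (1:ℝ≥0∞)) _)
      simp only [Pi.mul_apply, mul_one, ENNReal.one_rpow, lintegral_const, one_mul,
        Measure.restrict_apply_univ] at h
      have heq : ∀ θ, sqFn δ β θ ^ (2:ℝ) = T θ := fun θ => hrphalf (T θ)
      simp_rw [heq, volume_arc] at h
      calc (∫⁻ θ in arc δ k m, sqFn δ β θ)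
          ≤ (∫⁻ θ in arc δ k m, T θ) ^ (1/2:ℝ) * ENNReal.ofReal (arcLen k) ^ (1/2:ℝ) := h
      _ ≤ (Mt^2 * ENNReal.ofReal (arcLen k)) ^ (1/2:ℝ) * ENNReal.ofReal (arcLen k) ^ (1/2:ℝ) := by
          gcongr
      _ = Mt * ENNReal.ofReal (arcLen k) := by
          rw [ENNReal.mul_rpow_of_nonneg _ _ (by norm_num : (0:ℝ) ≤ 1/2)]
          have h1 : ((Mt^2 : ℝ≥0∞)) ^ ((1:ℝ)/2) = Mt := by
            rw [← ENNReal.rpow_natCast Mt 2, ← ENNReal.rpow_mul]; norm_num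
          rw [h1, mul_assoc, ← ENNReal.rpow_add _ _
            ((ENNReal.ofReal_pos.2 (arcLen_pos k)).ne') ENNReal.ofReal_ne_top]
          norm_num
    -- combine
    calc (∫⁻ θ in arc δ k m, psi0E (sqFn δ β θ))
        ≤ ∫⁻ θ in arc δ k m,
            (ENNReal.ofReal (psi0 M) + sqFn δ β θ * ENNReal.ofReal (psi0 M / M)) :=
        lintegral_mono (fun θ => psi0E_le hMpos _)
    _ = ENNReal.ofReal (psi0 M) * ENNReal.ofReal (arcLen k) +
          (∫⁻ θ in arc δ k m, sqFn δ β θ) * ENNReal.ofReal (psi0 M / M) := by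
        rw [lintegral_add_left measurable_const,
          lintegral_const, Measure.restrict_apply_univ, volume_arc,
          lintegral_mul_const _ hSmeas]
    _ ≤ ENNReal.ofReal (psi0 M) * ENNReal.ofReal (arcLen k) +
          (Mt * ENNReal.ofReal (arcLen k)) * ENNReal.ofReal (psi0 M / M) := by
        gcongr
    _ = ENNReal.ofReal (psi0 M) * ENNReal.ofReal (arcLen k) +
          ENNReal.ofReal (psi0 M) * ENNReal.ofReal (arcLen k) := by
        congr 1
        rw [hMt, mul_comm (ENNReal.ofReal M) (ENNReal.ofReal (arcLen k)), mul_assoc,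
          ← ENNReal.ofReal_mul (by positivity : (0:ℝ) ≤ M),
          show M * (psi0 M / M) = psi0 M by field_simp, mul_comm]
    _ ≤ ENNReal.ofReal ((1 + Real.sqrt (2 * π)) * arcLen k * psi0 M) := by
        have hψ : 0 ≤ psi0 M := psi0_nonneg hMpos.le
        have hℓ : 0 ≤ arcLen k := (arcLen_pos k).le
        have hsq : (1:ℝ) ≤ Real.sqrt (2*π) := by
          rw [show (1:ℝ) = Real.sqrt 1 by simp]
          exact Real.sqrt_le_sqrt (by nlinarith [Real.pi_gt_three])
        rw [← ENNReal.ofReal_mul hψ, ← ENNReal.ofReal_add (mul_nonneg hψ hℓ) (mul_nonneg hψ hℓ)]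
        apply ENNReal.ofReal_le_ofReal
        nlinarith [mul_nonneg (mul_nonneg (sub_nonneg.2 hsq) hψ) hℓ]
end
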